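/- The queue automaton of Figure 1 accepts exactly the language { ww | w ∈ {a,b}* }: its language, defined via its process graph, equals { ww | w ∈ {a,b}* }. -/

import Mathlib

/-- A labelled transition system with silent action `τ` modelled as `none`. -/
structure LTS (S A : Type) where
  tr : S → Option A → S → Prop
  fin : S → Prop

/-- Zero or more τ-steps. -/
def LTS.tauStar {S A : Type} (L : LTS S A) : S → S → Prop :=
  Relation.ReflTransGen (fun s t => L.tr s none t)

/-- `s →(a) t` : either `s →a t`, or `a = τ` and `s = t`. -/
def LTS.optStep {S A : Type} (L : LTS S A) (s : S) (a : Option A) (t : S) : Prop :=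
  L.tr s a t ∨ (a = none ∧ s = t)

/-- A symmetric relation `R` is a strong bisimulation. -/
def IsStrongBisim {S A : Type} (L : LTS S A) (R : S → S → Prop) : Prop :=
  (∀ s t, R s t → R t s) ∧
  (∀ s t, R s t →
    (∀ a s', L.tr s a s' → ∃ t', L.tr t a t' ∧ R s' t') ∧
    (L.fin s → L.fin t))

/-- Strong bisimilarity: related by some strong bisimulation. -/
def Bisim {S A : Type} (L : LTS S A) (s t : S) : Prop :=
  ∃ R, IsStrongBisim L R ∧ R s t

/-- A symmetric relation `R` is a branching bisimulation. -/
def IsBranchingBisim {S A : Type} (L : LTS S A) (R : S → S → Prop) : Prop :=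
  (∀ s t, R s t → R t s) ∧
  (∀ s t, R s t →
    (∀ a s', L.tr s a s' →
      ∃ t'' t', L.tauStar t t'' ∧ L.optStep t'' a t' ∧ R s t'' ∧ R s' t') ∧
    (L.fin s → ∃ t', L.tauStar t t' ∧ L.fin t'))

/-- Branching bisimilarity: related by some branching bisimulation. -/
def BBisim {S A : Type} (L : LTS S A) (s t : S) : Prop :=
  ∃ R, IsBranchingBisim L R ∧ R s t

/-- Weak word transitions: τ-steps do not contribute to the word. -/
inductive WStep {S A : Type} (L : LTS S A) : S → List A → S → Prop
  | refl (s : S) : WStep L s [] s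
  | act {s t u : S} {a : A} {w : List A} :
      L.tr s (some a) t → WStep L t w u → WStep L s (a :: w) u
  | tau {s t u : S} {w : List A} :
      L.tr s none t → WStep L t w u → WStep L s w u

/-- The language of a state: words leading to a terminating state. -/
def LTS.lang {S A : Type} (L : LTS S A) (s : S) : Set (List A) :=
  { w | ∃ t, WStep L s w t ∧ L.fin t }

/-- The head condition of a queue-automaton transition: `ε`, `*`, or a datum. -/
inductive Head (D : Type) where
  | emp : Head D
  | star : Head D
  | data (d : D) : Head D

/-- A queue automaton. -/
structure QA (S A D : Type) where
  tr : S → Option A → Head D → List D → S → Prop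
  init : S
  fin : S → Prop

/-- Effect of a transition with head condition `h` enqueueing `δ` on the queue
contents (head of the queue is the rightmost element, enqueueing prepends). -/
inductive QStep {D : Type} : Head D → List D → List D → List D → Prop
  | emp (δ : List D) : QStep Head.emp δ [] δ
  | data (d : D) (δ ζ : List D) : QStep (Head.data d) δ (ζ ++ [d]) (δ ++ ζ)
  | star (δ ζ : List D) : QStep Head.star δ ζ (δ ++ ζ)

/-- The process graph of a queue automaton. -/
def QA.proc {S A D : Type} (Q : QA S A D) : LTS (S × List D) A where
  tr := fun c a c' => ∃ h δ, Q.tr c.1 a h δ c'.1 ∧ QStep h δ c.2 c'.2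
  fin := fun c => Q.fin c.1

/-- The queue automaton has finitely many transitions. -/
def QA.FiniteTrans {S A D : Type} (Q : QA S A D) : Prop :=
  Set.Finite {x : S × Option A × Head D × List D × S |
    Q.tr x.1 x.2.1 x.2.2.1 x.2.2.2.1 x.2.2.2.2}

inductive AB where
  | a : AB
  | b : AB

inductive StWW where
  | s0 : StWW
  | s1 : StWW
  | s2 : StWW

/-- Transitions of the queue automaton of Figure 1. -/
inductive wwTr : StWW → Option AB → Head AB → List AB → StWW → Prop
  | load (d : AB) : wwTr StWW.s0 (some d) Head.star [d] StWW.s0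
  | switch (d : AB) : wwTr StWW.s0 (some d) (Head.data d) [] StWW.s1
  | switchEmp : wwTr StWW.s0 none Head.emp [] StWW.s1
  | unload (d : AB) : wwTr StWW.s1 (some d) (Head.data d) [] StWW.s1
  | done : wwTr StWW.s1 none Head.emp [] StWW.s2

/-- The queue automaton of Figure 1. -/
def wwQA : QA StWW AB AB :=
  { tr := wwTr, init := StWW.s0, fin := fun s => s = StWW.s2 }


section WWProof

lemma WStep.append {S A : Type} {L : LTS S A} {s t u : S} {w w' : List A}
    (h1 : WStep L s w t) (h2 : WStep L t w' u) : WStep L s (w ++ w') u := by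
  induction h1 with
  | refl => exact h2
  | act htr _ ih => exact WStep.act htr (ih h2)
  | tau htr _ ih => exact WStep.tau htr (ih h2)

lemma ww_load : ∀ (v δ : List AB),
    WStep wwQA.proc (StWW.s0, δ) v (StWW.s0, v.reverse ++ δ) := by
  intro v
  induction v with
  | nil => intro δ; simpa using WStep.refl _
  | cons d v ih =>
    intro δ
    have step : wwQA.proc.tr (StWW.s0, δ) (some d) (StWW.s0, d :: δ) :=
      ⟨Head.star, [d], wwTr.load d, QStep.star [d] δ⟩
    have := WStep.act step (ih (d :: δ))
    simpa using this

lemma ww_unload1 : ∀ (δ : List AB),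
    WStep wwQA.proc (StWW.s1, δ) δ.reverse (StWW.s1, []) := by
  intro δ
  induction δ using List.reverseRecOn with
  | nil => simpa using WStep.refl _
  | append_singleton ζ d ih =>
    have step : wwQA.proc.tr (StWW.s1, ζ ++ [d]) (some d) (StWW.s1, ζ) :=
      ⟨Head.data d, [], wwTr.unload d, by simpa using QStep.data d [] ζ⟩
    have := WStep.act step ih
    simpa using this

lemma ww_unload0 : ∀ (δ : List AB),
    WStep wwQA.proc (StWW.s0, δ) δ.reverse (StWW.s2, []) := by
  intro δ
  have fin_step : wwQA.proc.tr (StWW.s1, ([] : List AB)) none (StWW.s2, []) :=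
    ⟨Head.emp, [], wwTr.done, QStep.emp []⟩
  cases δ using List.reverseRecOn with
  | nil =>
    have step : wwQA.proc.tr (StWW.s0, ([] : List AB)) none (StWW.s1, []) :=
      ⟨Head.emp, [], wwTr.switchEmp, QStep.emp []⟩
    exact WStep.tau step (WStep.tau fin_step (WStep.refl _))
  | append_singleton ζ d =>
    have step : wwQA.proc.tr (StWW.s0, ζ ++ [d]) (some d) (StWW.s1, ζ) :=
      ⟨Head.data d, [], wwTr.switch d, by simpa using QStep.data d [] ζ⟩
    have h2 : WStep wwQA.proc (StWW.s1, ζ) ζ.reverse (StWW.s2, []) := by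
      have := WStep.append (ww_unload1 ζ) (WStep.tau fin_step (WStep.refl _))
      simpa using this
    have := WStep.act step h2
    simpa using this

lemma ww_main {c : StWW × List AB} {w : List AB} {t : StWW × List AB}
    (h : WStep wwQA.proc c w t) (hf : wwQA.proc.fin t) :
    (c.1 = StWW.s2 → w = []) ∧
    (c.1 = StWW.s1 → w = c.2.reverse) ∧
    (c.1 = StWW.s0 → ∃ u, w = u ++ c.2.reverse ++ u) := by
  induction h with
  | refl s =>
    have hs : s.1 = StWW.s2 := hf
    exact ⟨fun _ => rfl, fun h1 => by simp [h1] at hs, fun h0 => by simp [h0] at hs⟩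
  | @act s t' u x w htr hw ih =>
    obtain ⟨p, q⟩ := s
    obtain ⟨p', q'⟩ := t' 
    obtain ⟨hd, δ, htr', hq⟩ := htr
    obtain ⟨ih2, ih1, ih0⟩ := ih hf
    dsimp only at ih2 ih1 ih0 ⊢
    cases htr' with
    | load d =>
      cases hq with
      | star =>
        refine ⟨by rintro ⟨⟩, by rintro ⟨⟩, fun _ => ?_⟩
        obtain ⟨u', hu'⟩ := ih0 rfl
        refine ⟨x :: u', ?_⟩
        simp at hu' ⊢
        simp [hu']
    | switch d =>
      cases hq with
      | data _ _ ζ =>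
        refine ⟨by rintro ⟨⟩, by rintro ⟨⟩, fun _ => ?_⟩
        refine ⟨[], ?_⟩
        have := ih1 rfl
        simp at this ⊢
        simp [this]
    | unload d =>
      cases hq with
      | data _ _ ζ =>
        refine ⟨by rintro ⟨⟩, fun _ => ?_, by rintro ⟨⟩⟩
        have := ih1 rfl
        simp at this ⊢
        simp [this]
  | @tau s t' u w htr hw ih =>
    obtain ⟨p, q⟩ := s
    obtain ⟨p', q'⟩ := t' 
    obtain ⟨hd, δ, htr', hq⟩ := htr
    obtain ⟨ih2, ih1, ih0⟩ := ih hf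
    dsimp only at ih2 ih1 ih0 ⊢
    cases htr' with
    | switchEmp =>
      cases hq with
      | emp =>
        refine ⟨by rintro ⟨⟩, by rintro ⟨⟩, fun _ => ?_⟩
        refine ⟨[], ?_⟩
        have := ih1 rfl
        simpa using this
    | done =>
      cases hq with
      | emp =>
        refine ⟨by rintro ⟨⟩, fun _ => ?_, by rintro ⟨⟩⟩
        have := ih2 rfl
        simpa using this

end WWProof

/-- The queue automaton of Figure 1 accepts exactly the language
`{ ww | w ∈ {a,b}* }`. -/
theorem wwQA_language :
    wwQA.proc.lang (wwQA.init, []) = { w : List AB | ∃ v : List AB, w = v ++ v } := by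
  ext w
  constructor
  · rintro ⟨t, hw, hf⟩
    obtain ⟨_, _, h0⟩ := ww_main hw hf
    obtain ⟨u, hu⟩ := h0 rfl
    exact ⟨u, by simpa using hu⟩
  · rintro ⟨v, rfl⟩
    refine ⟨(StWW.s2, []), ?_, rfl⟩
    have h1 := ww_load v []
    have h2 := ww_unload0 v.reverse
    have := WStep.append h1 (by simpa using h2)
    exact (by simpa using this : WStep wwQA.proc (StWW.s0, []) (v ++ v) (StWW.s2, []))
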